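/- Let $c \in (0,1)$, $\gamma > 0$ and $\lambda_k = c e^{-\gamma k}$. Then the series $\sum_{k=0}^\infty \lambda_k \prod_{s=k+1}^\infty (1-\lambda_s)$ converges to a value in $(0,1]$, and each tail product satisfies $\prod_{s=k+1}^\infty (1-\lambda_s) < e^{z(\gamma; k+1)}$ where $z(\gamma; k) = -\frac{1}{\gamma} - \frac{\ln(1 - c e^{-\gamma(k+1)})}{\gamma} \cdot \frac{1 - c e^{-\gamma(k+1)}}{c e^{-\gamma(k+1)}}$. -/

import Mathlib

open Real

/-- Core analytic estimate. -/
lemma aux_core (γ a : ℝ) (hγ : 0 < γ) (ha0 : 0 < a) (ha1 : a < 1) :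
    (∑' s : ℕ, Real.log (1 - a * Real.exp (-γ) ^ s))
      < -1 / γ - Real.log (1 - a * Real.exp (-γ)) / γ
        * ((1 - a * Real.exp (-γ)) / (a * Real.exp (-γ))) := by
  set q := Real.exp (-γ) with hqdef
  have hq0 : 0 < q := Real.exp_pos _
  have hq1 : q < 1 := by
    rw [hqdef, Real.exp_lt_one_iff]; linarith
  set x := a * q with hxdef
  have hx0 : 0 < x := mul_pos ha0 hq0
  have hx1 : x < 1 := by
    have : a * q < 1 * 1 := mul_lt_mul' ha1.le hq1 hq0.le (by norm_num)
    simpa using this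
  have haq0 : ∀ s : ℕ, 0 < a * q ^ s := fun s => mul_pos ha0 (pow_pos hq0 s)
  have haq1 : ∀ s : ℕ, a * q ^ s < 1 := by
    intro s
    have h1 : q ^ s ≤ 1 := pow_le_one₀ hq0.le hq1.le
    nlinarith
  have hqn1 : ∀ n : ℕ, q ^ (n + 1) < 1 := fun n => pow_lt_one₀ hq0.le hq1 (Nat.succ_ne_zero n)
  -- the double family (n = p.1 power index, s = p.2 shift index)
  have hcol : ∀ s : ℕ, HasSum (fun n : ℕ => (a * q ^ s) ^ (n + 1) / (n + 1))
      (-Real.log (1 - a * q ^ s)) := by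
    intro s
    exact hasSum_pow_div_log_of_abs_lt_one (by rw [abs_of_pos (haq0 s)]; exact haq1 s)
  have hrow : ∀ n : ℕ, HasSum (fun s : ℕ => (a * q ^ s) ^ (n + 1) / (n + 1))
      (a ^ (n + 1) / ((n + 1) * (1 - q ^ (n + 1)))) := by
    intro n
    have hgeo : HasSum (fun s : ℕ => (q ^ (n + 1)) ^ s) (1 - q ^ (n + 1))⁻¹ :=
      hasSum_geometric_of_lt_one (by positivity) (hqn1 n)
    have h := hgeo.mul_left (a ^ (n + 1) / (n + 1))
    have he : (fun s : ℕ => a ^ (n + 1) / (n + 1) * (q ^ (n + 1)) ^ s)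
        = fun s : ℕ => (a * q ^ s) ^ (n + 1) / (n + 1) := by
      funext s
      rw [mul_pow, ← pow_mul, ← pow_mul, Nat.mul_comm (n + 1) s]
      ring
    rw [he] at h
    have hv : a ^ (n + 1) / ((n + 1) * (1 - q ^ (n + 1)))
        = a ^ (n + 1) / (n + 1) * (1 - q ^ (n + 1))⁻¹ := by
      rw [division_def, division_def, mul_inv]
      ring
    rw [hv]
    exact h
  -- summability of g
  have hgsummable : Summable (fun n : ℕ => a ^ (n + 1) / ((n + 1) * (1 - q ^ (n + 1)))) := by
    have hsum1 : Summable (fun n : ℕ => (1 / (1 - q)) * a ^ (n + 1)) := by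
      have : Summable (fun n : ℕ => a ^ (n + 1)) := by
        have := (summable_geometric_of_lt_one ha0.le ha1).mul_left a
        refine this.congr fun n => by rw [pow_succ, mul_comm]
      exact this.mul_left _
    refine Summable.of_nonneg_of_le ?_ ?_ hsum1
    · intro n
      have h1 : (0:ℝ) < ((n:ℝ) + 1) * (1 - q ^ (n + 1)) :=
        mul_pos (by positivity) (by linarith [hqn1 n])
      positivity
    · intro n
      have h2 : q ^ (n + 1) ≤ q := by
        calc q ^ (n + 1) ≤ q ^ 1 := pow_le_pow_of_le_one hq0.le hq1.le (by omega)
        _ = q := pow_one q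
      have h3 : (0:ℝ) ≤ (n:ℝ) := Nat.cast_nonneg n
      have h4 : (1:ℝ) - q ≤ ((n:ℝ) + 1) * (1 - q ^ (n + 1)) := by nlinarith [hqn1 n]
      have h5 : (0:ℝ) < 1 - q := by linarith
      calc a ^ (n + 1) / (((n:ℝ) + 1) * (1 - q ^ (n + 1)))
          ≤ a ^ (n + 1) / (1 - q) := by
            apply div_le_div_of_nonneg_left (by positivity) h5 h4
        _ = 1 / (1 - q) * a ^ (n + 1) := by ring
  -- summability of the double family
  have hFsummable : Summable (fun p : ℕ × ℕ => (a * q ^ p.2) ^ (p.1 + 1) / (p.1 + 1)) := by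
    rw [summable_prod_of_nonneg]
    · constructor
      · intro n
        exact (hrow n).summable
      · refine hgsummable.congr fun n => ?_
        exact ((hrow n).tsum_eq).symm
    · intro p
      have := haq0 p.2
      positivity
  set S : ℝ := ∑' p : ℕ × ℕ, (a * q ^ p.2) ^ (p.1 + 1) / (p.1 + 1) with hSdef
  have hgS : HasSum (fun n : ℕ => a ^ (n + 1) / ((n + 1) * (1 - q ^ (n + 1)))) S :=
    hFsummable.hasSum.prod_fiberwise hrow
  have hnegS : HasSum (fun s : ℕ => -Real.log (1 - a * q ^ s)) S := by
    have hswap : HasSum (fun p : ℕ × ℕ => (a * q ^ p.1) ^ (p.2 + 1) / (p.2 + 1)) S := by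
      have := (Equiv.prodComm ℕ ℕ).hasSum_iff
        (f := fun p : ℕ × ℕ => (a * q ^ p.2) ^ (p.1 + 1) / (p.1 + 1)) (a := S)
      exact this.2 hFsummable.hasSum
    exact hswap.prod_fiberwise hcol
  have hlogS : (∑' s : ℕ, Real.log (1 - a * q ^ s)) = -S := by
    have := hnegS.neg
    simp only [neg_neg] at this
    exact this.tsum_eq
  -- series for the dilog lower bound s(x)
  have hxne : x ≠ 0 := hx0.ne'
  have hγne : γ ≠ 0 := hγ.ne'
  have h1 : HasSum (fun n : ℕ => x ^ (n + 1) / (n + 1)) (-Real.log (1 - x)) :=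
    hasSum_pow_div_log_of_abs_lt_one (by rw [abs_of_pos hx0]; exact hx1)
  have h2 : HasSum (fun n : ℕ => x ^ (n + 1 + 1) / (↑(n + 1) + 1))
      (-Real.log (1 - x) - ∑ i ∈ Finset.range 1, x ^ (i + 1) / (i + 1)) :=
    (hasSum_nat_add_iff' 1).2 h1
  have hr1 : (∑ i ∈ Finset.range 1, x ^ (i + 1) / ((i:ℝ) + 1)) = x := by simp
  rw [hr1] at h2
  have h3 := h2.div_const x
  have hfe : (fun n : ℕ => x ^ (n + 1 + 1) / (↑(n + 1) + 1) / x)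
      = fun n : ℕ => x ^ (n + 1) / ((n:ℝ) + 2) := by
    funext n
    rw [pow_succ]
    push_cast
    field_simp
    ring
  rw [hfe] at h3
  have hh := (h1.sub h3).mul_left (1 / γ)
  -- termwise comparison
  have hterm : ∀ n : ℕ, 1 / γ * (x ^ (n + 1) / (↑n + 1) - x ^ (n + 1) / ((n:ℝ) + 2))
      < a ^ (n + 1) / ((↑n + 1) * (1 - q ^ (n + 1))) := by
    intro n
    have hn0 : (0:ℝ) ≤ (n:ℝ) := Nat.cast_nonneg n
    have e1 : 1 / γ * (x ^ (n + 1) / (↑n + 1) - x ^ (n + 1) / ((n:ℝ) + 2))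
        = x ^ (n + 1) / (γ * (((n:ℝ) + 1) * ((n:ℝ) + 2))) := by
      field_simp
      ring
    have key : 1 - q ^ (n + 1) < γ * ((n:ℝ) + 1) := by
      have hqe : q ^ (n + 1) = Real.exp (-(γ * ((n:ℝ) + 1))) := by
        rw [hqdef, ← Real.exp_nat_mul]
        push_cast
        ring_nf
      have := Real.add_one_lt_exp (x := -(γ * ((n:ℝ) + 1)))
        (by intro h; apply hγne; nlinarith [neg_eq_zero.1 h])
      rw [← hqe] at this
      linarith
    have hq1n : q ^ (n + 1) ≤ 1 := (hqn1 n).le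
    have hq0n : (0:ℝ) < q ^ (n + 1) := pow_pos hq0 _
    have key2 : q ^ (n + 1) * (1 - q ^ (n + 1)) < γ * ((n:ℝ) + 2) := by nlinarith
    rw [e1, div_lt_div_iff₀ (by positivity)
      (mul_pos (by positivity : (0:ℝ) < (n:ℝ) + 1) (by linarith [hqn1 n]))]
    have hxp : x ^ (n + 1) = a ^ (n + 1) * q ^ (n + 1) := by rw [hxdef, mul_pow]
    rw [hxp]
    have hA : (0:ℝ) < a ^ (n + 1) * ((n:ℝ) + 1) :=
      mul_pos (pow_pos ha0 _) (by positivity)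
    nlinarith [mul_lt_mul_of_pos_left key2 hA]
  have hnonneg : ∀ n : ℕ, 0 ≤ 1 / γ * (x ^ (n + 1) / (↑n + 1) - x ^ (n + 1) / ((n:ℝ) + 2)) := by
    intro n
    have hn0 : (0:ℝ) ≤ (n:ℝ) := Nat.cast_nonneg n
    have e1 : 1 / γ * (x ^ (n + 1) / (↑n + 1) - x ^ (n + 1) / ((n:ℝ) + 2))
        = x ^ (n + 1) / (γ * (((n:ℝ) + 1) * ((n:ℝ) + 2))) := by
      field_simp
      ring
    rw [e1]
    positivity
  have hlt : (1 / γ) * (-Real.log (1 - x) - (-Real.log (1 - x) - x) / x) < S := by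
    rw [← hh.tsum_eq, ← hgS.tsum_eq]
    exact Summable.tsum_lt_tsum_of_nonneg hnonneg (fun n => (hterm n).le) (hterm 0) hgS.summable
  have hval : (1 / γ) * (-Real.log (1 - x) - (-Real.log (1 - x) - x) / x)
      = -(-1 / γ - Real.log (1 - x) / γ * ((1 - x) / x)) := by
    field_simp
    ring
  rw [hlogS]
  rw [hval] at hlt
  linarith



/-- The bound `z(γ; k)` on the logarithm of the tail products. -/
noncomputable def zBound (c γ : ℝ) (k : ℕ) : ℝ :=
  -1 / γ - Real.log (1 - c * Real.exp (-γ * (k + 1))) / γ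
    * ((1 - c * Real.exp (-γ * (k + 1))) / (c * Real.exp (-γ * (k + 1))))

/-- For `λ_k = c e^{-γ k}` with `c ∈ (0,1)`, `γ > 0`: the series
`∑_{k=0}^∞ λ_k ∏_{s=k+1}^∞ (1-λ_s)` converges to a value in `(0,1]`, and each tail
product satisfies `∏_{s=k+1}^∞ (1-λ_s) < e^{z(γ; k+1)}`. -/
theorem tail_products_bound
    (c γ : ℝ) (hc : c ∈ Set.Ioo (0 : ℝ) 1) (hγ : 0 < γ)
    (lam : ℕ → ℝ) (hlam : ∀ k, lam k = c * Real.exp (-γ * k)) :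
    (Summable (fun k : ℕ => lam k * ∏' s : ℕ, (1 - lam (k + 1 + s))) ∧
      0 < (∑' k : ℕ, lam k * ∏' s : ℕ, (1 - lam (k + 1 + s))) ∧
      (∑' k : ℕ, lam k * ∏' s : ℕ, (1 - lam (k + 1 + s))) ≤ 1) ∧
    ∀ k : ℕ, (∏' s : ℕ, (1 - lam (k + 1 + s))) < Real.exp (zBound c γ (k + 1)) := by
  obtain ⟨hc0, hc1⟩ := hc
  have hq0 : (0:ℝ) < Real.exp (-γ) := Real.exp_pos _
  have hq1 : Real.exp (-γ) < 1 := by rw [Real.exp_lt_one_iff]; linarith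
  have hlam' : ∀ k : ℕ, lam k = c * Real.exp (-γ) ^ k := by
    intro k
    rw [hlam k, ← Real.exp_nat_mul]
    ring_nf
  have hlam_pos : ∀ k, 0 < lam k := by
    intro k; rw [hlam' k]; positivity
  have hlam_le : ∀ k, lam k ≤ c := by
    intro k
    rw [hlam' k]
    calc c * Real.exp (-γ) ^ k ≤ c * 1 := by
          exact mul_le_mul_of_nonneg_left (pow_le_one₀ hq0.le hq1.le) hc0.le
    _ = c := mul_one c
  have h1l : ∀ k, 0 < 1 - lam k := fun k => by linarith [hlam_le k]
  -- summability of lam and of the logs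
  have hsumlam : Summable lam := by
    refine Summable.congr ?_ (fun k => (hlam' k).symm)
    exact (summable_geometric_of_lt_one hq0.le hq1).mul_left c
  have hLnonpos : ∀ k, Real.log (1 - lam k) ≤ 0 := by
    intro k
    apply Real.log_nonpos (by linarith [h1l k]) (by linarith [hlam_pos k])
  have hsumL : Summable (fun k => Real.log (1 - lam k)) := by
    apply Summable.of_abs
    refine Summable.of_nonneg_of_le (fun k => abs_nonneg _) (fun k => ?_)
      (hsumlam.mul_left (1 / (1 - c)))
    rw [abs_of_nonpos (hLnonpos k)]
    have h2 : Real.log (1 / (1 - lam k)) ≤ 1 / (1 - lam k) - 1 :=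
      Real.log_le_sub_one_of_pos (one_div_pos.2 (h1l k))
    rw [Real.log_div one_ne_zero (h1l k).ne', Real.log_one] at h2
    have h3 : 1 / (1 - lam k) - 1 = lam k / (1 - lam k) := by
      field_simp [(h1l k).ne']
      ring
    have h4 : lam k / (1 - lam k) ≤ lam k / (1 - c) := by
      apply div_le_div_of_nonneg_left (hlam_pos k).le (by linarith) (by linarith [hlam_le k])
    calc -Real.log (1 - lam k) ≤ 1 / (1 - lam k) - 1 := by linarith
    _ = lam k / (1 - lam k) := h3
    _ ≤ lam k / (1 - c) := h4
    _ = 1 / (1 - c) * lam k := by ring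
  -- tail sums of logs and tail products
  have hsumT : ∀ k : ℕ, Summable (fun s => Real.log (1 - lam (k + s))) := by
    intro k
    refine ((summable_nat_add_iff k).2 hsumL).congr fun s => by rw [add_comm]
  have hQP : ∀ k : ℕ, HasProd (fun s => 1 - lam (k + s))
      (Real.exp (∑' s : ℕ, Real.log (1 - lam (k + s)))) := by
    intro k
    have h := (hsumT k).hasSum.rexp
    have hfe : (Real.exp ∘ fun s => Real.log (1 - lam (k + s))) = fun s => 1 - lam (k + s) :=
      funext fun s => Real.exp_log (h1l _)
    rwa [hfe] at h
  have hP : ∀ k : ℕ, (∏' s : ℕ, (1 - lam (k + 1 + s)))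
      = Real.exp (∑' s : ℕ, Real.log (1 - lam (k + 1 + s))) := fun k => (hQP (k + 1)).tprod_eq
  have hTnonpos : ∀ k : ℕ, (∑' s : ℕ, Real.log (1 - lam (k + s))) ≤ 0 := by
    intro k
    have := Summable.tsum_le_tsum (fun s => hLnonpos (k + s)) (hsumT k) summable_zero
    simpa using this
  have hQle1 : ∀ k : ℕ, Real.exp (∑' s : ℕ, Real.log (1 - lam (k + s))) ≤ 1 :=
    fun k => Real.exp_le_one_iff.2 (hTnonpos k)
  have hrec : ∀ k : ℕ, (1 - lam k) * Real.exp (∑' s : ℕ, Real.log (1 - lam (k + 1 + s)))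
      = Real.exp (∑' s : ℕ, Real.log (1 - lam (k + s))) := by
    intro k
    have hz := Summable.tsum_eq_zero_add (hsumT k)
    have he : (fun s : ℕ => Real.log (1 - lam (k + (s + 1))))
        = fun s : ℕ => Real.log (1 - lam (k + 1 + s)) := by
      funext s
      have : k + (s + 1) = k + 1 + s := by omega
      rw [this]
    rw [he] at hz
    have hk0 : k + 0 = k := Nat.add_zero k
    rw [hz, hk0, Real.exp_add, Real.exp_log (h1l k)]
  set P : ℕ → ℝ := fun k => Real.exp (∑' s : ℕ, Real.log (1 - lam (k + s))) with hPdef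
  have hPpos : ∀ k, 0 < P k := fun k => Real.exp_pos _
  simp only [hP]
  have htel : ∀ k : ℕ, lam k * P (k + 1) = P (k + 1) - P k := by
    intro k
    have := hrec k
    simp only [hPdef] at *
    nlinarith [this]
  have hterm_nonneg : ∀ k : ℕ, 0 ≤ lam k * P (k + 1) :=
    fun k => mul_nonneg (hlam_pos k).le (hPpos (k + 1)).le
  have hsummain : Summable (fun k : ℕ => lam k * P (k + 1)) := by
    refine Summable.of_nonneg_of_le hterm_nonneg (fun k => ?_) hsumlam
    calc lam k * P (k + 1) ≤ lam k * 1 :=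
          mul_le_mul_of_nonneg_left (hQle1 (k + 1)) (hlam_pos k).le
    _ = lam k := mul_one _
  refine ⟨⟨hsummain, ?_, ?_⟩, ?_⟩
  · have h0 : 0 < lam 0 * P 1 := mul_pos (hlam_pos 0) (hPpos 1)
    calc (0:ℝ) < lam 0 * P 1 := h0
    _ ≤ ∑' k : ℕ, lam k * P (k + 1) := Summable.le_tsum hsummain 0 (fun j _ => hterm_nonneg j)
  · apply Real.tsum_le_of_sum_range_le hterm_nonneg
    intro n
    have : ∑ i ∈ Finset.range n, lam i * P (i + 1)
        = ∑ i ∈ Finset.range n, (P (i + 1) - P i) :=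
      Finset.sum_congr rfl (fun i _ => htel i)
    rw [this, Finset.sum_range_sub]
    have : P n ≤ 1 := hQle1 n
    have := hPpos 0
    linarith
  · intro k
    rw [Real.exp_lt_exp]
    have ha0 : 0 < lam (k + 1) := hlam_pos (k + 1)
    have ha1 : lam (k + 1) < 1 := by linarith [h1l (k + 1)]
    have hcore := aux_core γ (lam (k + 1)) hγ ha0 ha1
    have hsum_eq : (∑' s : ℕ, Real.log (1 - lam (k + 1 + s)))
        = ∑' s : ℕ, Real.log (1 - lam (k + 1) * Real.exp (-γ) ^ s) := by
      apply tsum_congr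
      intro s
      congr 2
      rw [hlam' (k + 1 + s), hlam' (k + 1), pow_add]
      ring
    have hx_eq : c * Real.exp (-γ * (↑(k + 1) + 1)) = lam (k + 1) * Real.exp (-γ) := by
      rw [hlam' (k + 1), ← Real.exp_nat_mul]
      rw [mul_assoc, ← Real.exp_add]
      congr 1
      push_cast
      ring
    rw [zBound, hx_eq, hsum_eq]
    exact hcore
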